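/- Let r > 0 and let n ≥ 1 be a natural number. For x̃ ∈ ℝ², write d_M²(x̃) = (x̃ − m(x̃))ᵀ Σ(x̃)⁻¹ (x̃ − m(x̃)), where m(x̃) = x̃/(n+1) and Σ(x̃) = (n r²/(4(n+1)))·I₂ + (n/(n+1)²)·x̃ x̃ᵀ. Then d_M² is monotone in the norm of the poisoned sample: for any x̃₁, x̃₂ ∈ ℝ² with ‖x̃₁‖ ≤ ‖x̃₂‖, one has d_M²(x̃₁) ≤ d_M²(x̃₂). In particular, a boundary sample x̃_b with ‖x̃_b‖ ≤ ‖x̃_u‖ for a randomly chosen x̃_u has squared Mahalanobis distance from the poisoned target class no larger than that of x̃_u. -/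

import Mathlib

open Matrix

/-- The squared Mahalanobis distance `d_M²(x̃)` of a poisoned sample from the poisoned target
class (mean `x̃/(n+1)`, covariance `(n r²/(4(n+1)))·I₂ + (n/(n+1)²)·x̃ x̃ᵀ`) is monotone
nondecreasing in `‖x̃‖`: if `‖x̃₁‖ ≤ ‖x̃₂‖` then `d_M²(x̃₁) ≤ d_M²(x̃₂)`. -/
theorem mahalanobis_monotone_in_norm
    (r : ℝ) (hr : 0 < r) (n : ℕ) (hn : 1 ≤ n)
    (dM : EuclideanSpace ℝ (Fin 2) → ℝ)
    (hdM : ∀ xt : EuclideanSpace ℝ (Fin 2),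
      dM xt = (xt - ((n : ℝ) + 1)⁻¹ • xt) ⬝ᵥ
        ((((n : ℝ) * r ^ 2 / (4 * ((n : ℝ) + 1))) • (1 : Matrix (Fin 2) (Fin 2) ℝ)
            + ((n : ℝ) / ((n : ℝ) + 1) ^ 2) • Matrix.of (fun i j => xt i * xt j))⁻¹
          *ᵥ (xt - ((n : ℝ) + 1)⁻¹ • xt))) :
    ∀ xt₁ xt₂ : EuclideanSpace ℝ (Fin 2), ‖xt₁‖ ≤ ‖xt₂‖ → dM xt₁ ≤ dM xt₂ := by
  have hn1 : (0:ℝ) < (n:ℝ) := by exact_mod_cast Nat.lt_of_lt_of_le Nat.zero_lt_one hn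
  have hn2 : (0:ℝ) < (n:ℝ) + 1 := by linarith
  set a : ℝ := (n : ℝ) * r ^ 2 / (4 * ((n : ℝ) + 1)) with ha_def
  set b : ℝ := (n : ℝ) / ((n : ℝ) + 1) ^ 2 with hb_def
  have ha : 0 < a := by positivity
  have hb : 0 < b := by positivity
  have key : ∀ x : EuclideanSpace ℝ (Fin 2),
      dM x = ((n:ℝ)/((n:ℝ)+1))^2 * (‖x‖^2 / (a + b * ‖x‖^2)) := by
    intro x
    have hs : ‖x‖^2 = x 0 ^ 2 + x 1 ^ 2 := by
      rw [EuclideanSpace.norm_eq, Real.sq_sqrt (by positivity)]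
      simp [Fin.sum_univ_two, sq_abs]
    set s : ℝ := x 0 ^ 2 + x 1 ^ 2 with hs_def
    have hsnn : 0 ≤ s := by positivity
    have hdet : a ^ 2 + a * b * s ≠ 0 := by positivity
    have hden : a + b * s ≠ 0 := by positivity
    have hinv :
        ((a • (1 : Matrix (Fin 2) (Fin 2) ℝ)
            + b • Matrix.of (fun i j => x i * x j))⁻¹ : Matrix (Fin 2) (Fin 2) ℝ)
        = (a ^ 2 + a * b * s)⁻¹ •
            !![a + b * x 1 ^ 2, -(b * x 0 * x 1); -(b * x 0 * x 1), a + b * x 0 ^ 2] := by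
      apply inv_eq_right_inv
      ext i j
      fin_cases i <;> fin_cases j <;>
        simp [Matrix.mul_apply, Fin.sum_univ_two, Matrix.one_apply, Matrix.smul_apply,
          Matrix.add_apply] <;> field_simp <;> ring
    rw [hdM x, hinv, hs]
    have hvec : ∀ i, (x - ((n : ℝ) + 1)⁻¹ • x) i = ((n:ℝ)/((n:ℝ)+1)) * x i := by
      intro i
      simp [PiLp.sub_apply, PiLp.smul_apply, smul_eq_mul]
      field_simp
      ring
    simp only [dotProduct, Matrix.mulVec, Fin.sum_univ_two, hvec,
      Matrix.smul_apply, smul_eq_mul, Matrix.cons_val', Matrix.cons_val_zero,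
      Matrix.cons_val_one, Matrix.head_cons, Matrix.head_fin_const, Matrix.empty_val',
      Matrix.cons_val_fin_one, dotProduct, Matrix.of_apply]
    field_simp
    ring
  intro x1 x2 h
  rw [key x1, key x2]
  have h2 : ‖x1‖^2 ≤ ‖x2‖^2 := by
    have := norm_nonneg x1
    nlinarith
  apply mul_le_mul_of_nonneg_left _ (by positivity)
  rw [div_le_div_iff₀ (by positivity) (by positivity)]
  nlinarith [norm_nonneg x1, norm_nonneg x2, sq_nonneg ‖x1‖, sq_nonneg ‖x2‖]
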